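/- For the symmetric group S_n with basic invariants the elementary symmetric polynomials p_1,...,p_n, the quantity λ_a(x) := 2·Σ_{1≤i<j≤n} (∂p_a/∂x_i − ∂p_a/∂x_j)(x)/(x_i − x_j) is a polynomial in x (despite the denominators) and equals −(n−a+2)(n−a+1)·p_{a−2}(x) for all a = 1,...,n, where p_{−1} = 0 and p_0 = 1. -/

import Mathlib

open MvPolynomial Finset

noncomputable def Ee (n : ℕ) (s : Finset (Fin n)) (b : ℕ) : MvPolynomial (Fin n) ℝ :=
  ∑ t ∈ Finset.powersetCard b s, ∏ k ∈ t, X k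

lemma Ee_univ (n b : ℕ) : Ee n Finset.univ b = esymm (Fin n) ℝ b := rfl

lemma pderiv_prod_X (n : ℕ) (i : Fin n) (t : Finset (Fin n)) :
    pderiv i (∏ k ∈ t, (X k : MvPolynomial (Fin n) ℝ))
      = if i ∈ t then ∏ k ∈ t.erase i, X k else 0 := by
  induction t using Finset.induction with
  | empty => simp
  | insert _ _ hx =>
    rename_i x t ih
    rw [Finset.prod_insert hx, pderiv_mul, ih]
    by_cases hix : i = x
    · subst hix
      simp [hx, Finset.erase_insert hx]
    · rw [pderiv_X_of_ne (Ne.symm hix)]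
      by_cases hit : i ∈ t
      · simp only [hit, if_true, Finset.mem_insert, hix, false_or]
        rw [Finset.erase_insert_of_ne (Ne.symm hix),
          Finset.prod_insert (fun h => hx (Finset.mem_of_mem_erase h))]
        ring
      · simp [hit, hix]

lemma powersetCard_insert_disjoint (n : ℕ) (i : Fin n) (s' : Finset (Fin n)) (hni : i ∉ s') (b : ℕ) :
    Disjoint (Finset.powersetCard (b+1) s') ((Finset.powersetCard b s').image (insert i)) := by
  rw [Finset.disjoint_left]
  rintro t ht ht'
  rw [Finset.mem_image] at ht'
  obtain ⟨u, _, rfl⟩ := ht'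
  rw [Finset.mem_powersetCard] at ht
  exact hni (ht.1 (Finset.mem_insert_self i u))

lemma insert_injOn (n : ℕ) (i : Fin n) (s' : Finset (Fin n)) (hni : i ∉ s') (b : ℕ) :
    ∀ t ∈ Finset.powersetCard b s', ∀ t' ∈ Finset.powersetCard b s',
      insert i t = insert i t' → t = t' := by
  intro t ht t' ht' h
  rw [Finset.mem_powersetCard] at ht ht'
  have h1 : i ∉ t := fun h => hni (ht.1 h)
  have h2 : i ∉ t' := fun h => hni (ht'.1 h)
  rw [← Finset.erase_insert h1, ← Finset.erase_insert h2, h]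

lemma pderiv_Ee (n : ℕ) (i : Fin n) (s : Finset (Fin n)) (hi : i ∈ s) (b : ℕ) :
    pderiv i (Ee n s (b+1)) = Ee n (s.erase i) b := by
  obtain ⟨s', hni, rfl⟩ : ∃ s', i ∉ s' ∧ s = insert i s' :=
    ⟨s.erase i, Finset.notMem_erase i s, (Finset.insert_erase hi).symm⟩
  rw [Finset.erase_insert hni, Ee, Finset.powersetCard_succ_insert hni,
    Finset.sum_union (powersetCard_insert_disjoint n i s' hni b), map_add, map_sum, map_sum,
    Finset.sum_image (insert_injOn n i s' hni b)]
  have h1 : ∑ t ∈ Finset.powersetCard (b+1) s', pderiv i (∏ k ∈ t, (X k : MvPolynomial (Fin n) ℝ)) = 0 := by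
    refine Finset.sum_eq_zero fun t ht => ?_
    rw [Finset.mem_powersetCard] at ht
    rw [pderiv_prod_X, if_neg (fun h => hni (ht.1 h))]
  rw [h1, zero_add]
  refine Finset.sum_congr rfl fun t ht => ?_
  rw [Finset.mem_powersetCard] at ht
  have h2 : i ∉ t := fun h => hni (ht.1 h)
  rw [pderiv_prod_X, if_pos (Finset.mem_insert_self i t), Finset.erase_insert h2]

lemma Ee_split (n : ℕ) (j : Fin n) (s : Finset (Fin n)) (hj : j ∈ s) (b : ℕ) :
    Ee n s (b+1) = Ee n (s.erase j) (b+1) + X j * Ee n (s.erase j) b := by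
  obtain ⟨s', hni, rfl⟩ : ∃ s', j ∉ s' ∧ s = insert j s' :=
    ⟨s.erase j, Finset.notMem_erase j s, (Finset.insert_erase hj).symm⟩
  rw [Finset.erase_insert hni]
  show Ee n _ _ = _
  rw [Ee, Finset.powersetCard_succ_insert hni,
    Finset.sum_union (powersetCard_insert_disjoint n j s' hni b),
    Finset.sum_image (insert_injOn n j s' hni b)]
  congr 1
  rw [Ee, Finset.mul_sum]
  refine Finset.sum_congr rfl fun t ht => ?_
  rw [Finset.mem_powersetCard] at ht
  rw [Finset.prod_insert (fun h => hni (ht.1 h))]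

lemma Ee_erase_erase (n : ℕ) (i j : Fin n) (b : ℕ) :
    Ee n ((Finset.univ.erase i).erase j) b
      = ∑ t ∈ Finset.powersetCard b (Finset.univ : Finset (Fin n)),
          if i ∉ t ∧ j ∉ t then ∏ k ∈ t, X k else 0 := by
  rw [← Finset.sum_filter, Ee]
  congr 1
  ext t
  simp only [Finset.mem_powersetCard, Finset.mem_filter, Finset.subset_erase,
    Finset.subset_univ, true_and]
  tauto

lemma offDiag_split (n : ℕ) :
    (Finset.univ : Finset (Fin n)).offDiag
      = ((Finset.univ ×ˢ Finset.univ : Finset (Fin n × Fin n)).filter fun p => p.1 < p.2)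
        ∪ ((Finset.univ ×ˢ Finset.univ : Finset (Fin n × Fin n)).filter fun p => p.2 < p.1) := by
  ext p
  constructor
  · intro h
    have h' := Finset.mem_offDiag.mp h
    rcases lt_or_gt_of_ne h'.2.2 with hlt | hgt
    · exact Finset.mem_union_left _ (Finset.mem_filter.mpr ⟨by simp, hlt⟩)
    · exact Finset.mem_union_right _ (Finset.mem_filter.mpr ⟨by simp, hgt⟩)
  · intro h
    rcases Finset.mem_union.mp h with h' | h' <;>
      exact Finset.mem_offDiag.mpr ⟨Finset.mem_univ _, Finset.mem_univ _,
        by have := (Finset.mem_filter.mp h').2; omega⟩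

lemma sum_filter_lt {M : Type*} [AddCommMonoid M] (n : ℕ) (f : Fin n → Fin n → M) :
    ∑ p ∈ (Finset.univ ×ˢ Finset.univ : Finset (Fin n × Fin n)).filter (fun p => p.1 < p.2),
        f p.1 p.2
      = ∑ i, ∑ j ∈ Finset.Ioi i, f i j := by
  rw [Finset.sum_filter, Finset.sum_product]
  refine Finset.sum_congr rfl fun i _ => ?_
  rw [← Finset.sum_filter]
  congr 1
  ext j
  simp

lemma sum_offDiag_symm {M : Type*} [AddCommMonoid M] (n : ℕ) (f : Fin n → Fin n → M)
    (hf : ∀ i j, f i j = f j i) :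
    ∑ p ∈ (Finset.univ : Finset (Fin n)).offDiag, f p.1 p.2
      = (∑ i, ∑ j ∈ Finset.Ioi i, f i j) + (∑ i, ∑ j ∈ Finset.Ioi i, f i j) := by
  have hdisj : Disjoint
      ((Finset.univ ×ˢ Finset.univ : Finset (Fin n × Fin n)).filter fun p => p.1 < p.2)
      ((Finset.univ ×ˢ Finset.univ : Finset (Fin n × Fin n)).filter fun p => p.2 < p.1) := by
    rw [Finset.disjoint_left]
    rintro p hp hp'
    have h1 := (Finset.mem_filter.mp hp).2
    have h2 := (Finset.mem_filter.mp hp').2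
    omega
  have hGT : ∑ p ∈ (Finset.univ ×ˢ Finset.univ : Finset (Fin n × Fin n)).filter
        (fun p => p.2 < p.1), f p.1 p.2
      = ∑ p ∈ (Finset.univ ×ˢ Finset.univ : Finset (Fin n × Fin n)).filter
        (fun p => p.1 < p.2), f p.1 p.2 := by
    refine Finset.sum_nbij' Prod.swap Prod.swap ?_ ?_ ?_ ?_ ?_
    · intro p hp
      simpa [Finset.mem_filter] using (Finset.mem_filter.mp hp).2
    · intro p hp
      simpa [Finset.mem_filter] using (Finset.mem_filter.mp hp).2
    · intro p _; exact Prod.swap_swap p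
    · intro p _; exact Prod.swap_swap p
    · intro p _; exact hf p.1 p.2
  rw [offDiag_split, Finset.sum_union hdisj, hGT, sum_filter_lt]

lemma count_offDiag {M : Type*} [AddCommMonoid M] (n : ℕ) (t : Finset (Fin n)) (x : M) :
    ∑ p ∈ (Finset.univ : Finset (Fin n)).offDiag, (if p.1 ∉ t ∧ p.2 ∉ t then x else 0)
      = (tᶜ.card * tᶜ.card - tᶜ.card) • x := by
  rw [← Finset.sum_filter]
  have hfe : (Finset.univ : Finset (Fin n)).offDiag.filter (fun p => p.1 ∉ t ∧ p.2 ∉ t)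
      = (tᶜ : Finset (Fin n)).offDiag := by
    ext p
    simp only [Finset.mem_filter, Finset.mem_offDiag, Finset.mem_compl, Finset.mem_univ, true_and]
    tauto
  rw [hfe, Finset.sum_const, Finset.offDiag_card]


/-- The `λ`-vector of `Sₙ`: each difference `∂pₐ/∂xᵢ - ∂pₐ/∂xⱼ` is divisible by
`xᵢ - xⱼ` as a polynomial, and twice the sum over `i < j` of the quotients equals
`-(n-a+2)(n-a+1)·p_{a-2}` (with `p₋₁ = 0`, `p₀ = 1`). -/
theorem Sn_lambda_vector (n a : ℕ) (ha : 1 ≤ a) (han : a ≤ n) :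
    ∃ Q : Fin n → Fin n → MvPolynomial (Fin n) ℝ,
      (∀ i j : Fin n, i < j →
          pderiv i (esymm (Fin n) ℝ a) - pderiv j (esymm (Fin n) ℝ a)
            = (X i - X j) * Q i j)
      ∧ (2 : MvPolynomial (Fin n) ℝ) * ∑ i : Fin n, ∑ j ∈ Finset.Ioi i, Q i j
          = if a = 1 then 0
            else C (-(((n - a + 2) * (n - a + 1) : ℕ) : ℝ)) * esymm (Fin n) ℝ (a - 2) := by
  by_cases h1 : a = 1
  · subst h1
    refine ⟨fun _ _ => 0, fun i j _ => ?_, by simp⟩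
    have hp : ∀ i : Fin n, pderiv i (esymm (Fin n) ℝ 1) = 1 := fun i => by
      rw [← Ee_univ, show (1:ℕ) = 0 + 1 from rfl, pderiv_Ee n i _ (Finset.mem_univ i)]
      simp [Ee]
    rw [hp i, hp j, sub_self, mul_zero]
  · obtain ⟨b, rfl⟩ : ∃ b, a = b + 2 := ⟨a - 2, by omega⟩
    refine ⟨fun i j => -Ee n ((Finset.univ.erase i).erase j) b, fun i j hij => ?_, ?_⟩
    · have hne : i ≠ j := ne_of_lt hij
      have hji : j ∈ Finset.univ.erase i := Finset.mem_erase.mpr ⟨hne.symm, Finset.mem_univ j⟩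
      have hij' : i ∈ Finset.univ.erase j := Finset.mem_erase.mpr ⟨hne, Finset.mem_univ i⟩
      rw [← Ee_univ, show b + 2 = (b+1) + 1 from rfl,
        pderiv_Ee n i _ (Finset.mem_univ i), pderiv_Ee n j _ (Finset.mem_univ j),
        Ee_split n j _ hji b, Ee_split n i _ hij' b,
        show (Finset.univ.erase j).erase i = (Finset.univ.erase i).erase j from
          Finset.erase_right_comm]
      ring
    · rw [if_neg h1]
      have hc : n - (b+2) + 2 = n - b := by omega
      have hc2 : n - (b+2) + 1 = n - b - 1 := by omega
      have key : (∑ i : Fin n, ∑ j ∈ Finset.Ioi i, Ee n ((Finset.univ.erase i).erase j) b)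
            + (∑ i : Fin n, ∑ j ∈ Finset.Ioi i, Ee n ((Finset.univ.erase i).erase j) b)
          = (((n - b) * (n - b - 1) : ℕ) : MvPolynomial (Fin n) ℝ) * esymm (Fin n) ℝ b := by
        rw [← sum_offDiag_symm n (fun i j => Ee n ((Finset.univ.erase i).erase j) b)
          (fun i j => by
            show Ee n ((Finset.univ.erase i).erase j) b
              = Ee n ((Finset.univ.erase j).erase i) b
            rw [Finset.erase_right_comm])]
        calc ∑ p ∈ (Finset.univ : Finset (Fin n)).offDiag,
              Ee n ((Finset.univ.erase p.1).erase p.2) b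
            = ∑ p ∈ (Finset.univ : Finset (Fin n)).offDiag,
                ∑ t ∈ Finset.powersetCard b (Finset.univ : Finset (Fin n)),
                  if p.1 ∉ t ∧ p.2 ∉ t then ∏ k ∈ t, X k else 0 :=
              Finset.sum_congr rfl fun p _ => Ee_erase_erase n p.1 p.2 b
          _ = ∑ t ∈ Finset.powersetCard b (Finset.univ : Finset (Fin n)),
                ∑ p ∈ (Finset.univ : Finset (Fin n)).offDiag,
                  if p.1 ∉ t ∧ p.2 ∉ t then ∏ k ∈ t, X k else 0 := Finset.sum_comm
          _ = ∑ t ∈ Finset.powersetCard b (Finset.univ : Finset (Fin n)),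
                (((n - b) * (n - b - 1) : ℕ)) • ∏ k ∈ t, X k := by
              refine Finset.sum_congr rfl fun t ht => ?_
              rw [count_offDiag]
              congr 1
              have hcard : (tᶜ : Finset (Fin n)).card = n - b := by
                rw [Finset.card_compl, Fintype.card_fin,
                  (Finset.mem_powersetCard.mp ht).2]
              rw [hcard]
              rcases Nat.eq_zero_or_pos (n - b) with h | h
              · simp [h]
              · obtain ⟨k, hk⟩ : ∃ k, n - b = k + 1 := ⟨n - b - 1, by omega⟩
                rw [hk, show (k+1)*(k+1) = (k+1)*k + (k+1) by ring, Nat.add_sub_cancel,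
                  Nat.succ_sub_one]
          _ = (((n - b) * (n - b - 1) : ℕ) : MvPolynomial (Fin n) ℝ) * esymm (Fin n) ℝ b := by
              rw [← Finset.smul_sum, nsmul_eq_mul, ← Ee_univ, Ee]
      rw [hc, hc2, show b + 2 - 2 = b from rfl, map_neg, C_eq_coe_nat, neg_mul, ← key]
      simp only [Finset.sum_neg_distrib]
      ring
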